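/- Let N > 0, ū ≥ 0, V₁ > ū, and define M : (0,∞) → ℝ by M(Q) = (2/3)(V₁ − ū)·√((V₁ − ū)QN/3) if 0 < Q < 3N/(V₁ − ū), and M(Q) = N·(V₁ − ū − N/Q) if Q ≥ 3N/(V₁ − ū). Then M is continuous and strictly increasing on (0,∞). -/

import Mathlib

/-- Proposition 1 of the paper: the benchmark 5G operator's maximal profit
`M(Q)` (equation (10)) is continuous and strictly increasing in the network
capacity `Q` on `(0, ∞)`. -/
theorem stmt_6 (N ubar V₁ : ℝ) (M : ℝ → ℝ)
    (hN : 0 < N) (hubar : 0 ≤ ubar) (hV : ubar < V₁)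
    (hM₁ : ∀ Q, 0 < Q → Q < 3 * N / (V₁ - ubar) →
      M Q = (2 / 3) * (V₁ - ubar) * Real.sqrt ((V₁ - ubar) * Q * N / 3))
    (hM₂ : ∀ Q, 3 * N / (V₁ - ubar) ≤ Q → M Q = N * (V₁ - ubar - N / Q)) :
    ContinuousOn M (Set.Ioi (0 : ℝ)) ∧ StrictMonoOn M (Set.Ioi (0 : ℝ)) := by
  set a : ℝ := V₁ - ubar with ha_def
  have ha : 0 < a := sub_pos.mpr hV
  set Qs : ℝ := 3 * N / a with hQs_def
  have hQs : 0 < Qs := by positivity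
  set g : ℝ → ℝ := fun Q => (2 / 3) * a * Real.sqrt (a * Q * N / 3) with hg_def
  set h : ℝ → ℝ := fun Q => N * (a - N / Q) with hh_def
  -- value at the junction
  have harg : a * Qs * N / 3 = N ^ 2 := by
    field_simp [hQs_def]
    rw [hQs_def, mul_div_assoc', mul_div_right_comm, div_self ha.ne']
    ring
  have hgQs : g Qs = (2 / 3) * a * N := by
    simp only [hg_def, harg, Real.sqrt_sq hN.le]
  have hhQs : h Qs = (2 / 3) * a * N := by
    have : N / Qs = a / 3 := by
      rw [hQs_def]
      field_simp
    simp only [hh_def, this]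
    ring
  -- M agrees with g on Ioc 0 Qs and with h on Ici Qs
  have hMg : ∀ Q ∈ Set.Ioc (0 : ℝ) Qs, M Q = g Q := by
    intro Q hQ
    rcases lt_or_eq_of_le hQ.2 with hlt | heq
    · exact hM₁ Q hQ.1 hlt
    · rw [heq, hgQs, hM₂ Qs le_rfl, ← hhQs]
  have hMh : ∀ Q ∈ Set.Ici Qs, M Q = h Q := fun Q hQ => hM₂ Q hQ
  -- strict monotonicity of g and h
  have hgmono : ∀ x y : ℝ, 0 < x → x < y → g x < g y := by
    intro x y hx hxy
    have h1 : a * x * N / 3 < a * y * N / 3 := by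
      have h0 : a * N * x < a * N * y := mul_lt_mul_of_pos_left hxy (mul_pos ha hN)
      nlinarith [h0]
    have h2 : Real.sqrt (a * x * N / 3) < Real.sqrt (a * y * N / 3) :=
      Real.sqrt_lt_sqrt (by positivity) h1
    have : (0 : ℝ) < (2 / 3) * a := by positivity
    exact mul_lt_mul_of_pos_left h2 this
  have hhmono : ∀ x y : ℝ, 0 < x → x < y → h x < h y := by
    intro x y hx hxy
    have hy : 0 < y := hx.trans hxy
    have : N / y < N / x := div_lt_div_of_pos_left hN hx hxy
    have : a - N / x < a - N / y := by linarith
    exact mul_lt_mul_of_pos_left this hN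
  constructor
  · -- continuity
    have hcover : Set.Ioi (0 : ℝ) = Set.Ioc 0 Qs ∪ Set.Ici Qs := by
      ext x
      simp only [Set.mem_Ioi, Set.mem_union, Set.mem_Ioc, Set.mem_Ici]
      constructor
      · intro hx
        rcases le_or_gt x Qs with h | h
        · exact Or.inl ⟨hx, h⟩
        · exact Or.inr h.le
      · rintro (⟨hx, _⟩ | hx)
        · exact hx
        · exact hQs.trans_le hx
    have hcg : ContinuousOn M (Set.Ioc 0 Qs) := by
      have : ContinuousOn g (Set.Ioc 0 Qs) := by
        have hf : Continuous fun Q : ℝ => a * Q * N / 3 :=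
          ((continuous_const.mul continuous_id).mul continuous_const).div_const 3
        exact (continuous_const.mul hf.sqrt).continuousOn
      exact this.congr hMg
    have hch : ContinuousOn M (Set.Ici Qs) := by
      have : ContinuousOn h (Set.Ici Qs) := by
        apply ContinuousOn.mul continuousOn_const
        apply ContinuousOn.sub continuousOn_const
        apply ContinuousOn.div continuousOn_const continuousOn_id
        intro x hx
        exact (hQs.trans_le hx).ne'
      exact this.congr hMh
    rw [hcover]
    intro x hx
    have hx0 : 0 < x := by
      rcases hx with hx | hx
      · exact hx.1
      · exact hQs.trans_le hx
    apply ContinuousWithinAt.union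
    · by_cases hmem : x ∈ Set.Ioc (0 : ℝ) Qs
      · exact hcg x hmem
      · apply continuousWithinAt_of_notMem_closure
        rw [closure_Ioc hQs.ne]
        exact fun hcl => hmem ⟨hx0, hcl.2⟩
    · by_cases hmem : x ∈ Set.Ici Qs
      · exact hch x hmem
      · apply continuousWithinAt_of_notMem_closure
        rw [closure_Ici]
        exact hmem
  · -- strict monotonicity
    intro x hx y hy hxy
    simp only [Set.mem_Ioi] at hx hy
    rcases le_or_gt y Qs with hyQ | hyQ
    · rw [hMg x ⟨hx, hxy.le.trans hyQ⟩, hMg y ⟨hy, hyQ⟩]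
      exact hgmono x y hx hxy
    · rcases le_or_gt Qs x with hxQ | hxQ
      · rw [hMh x hxQ, hMh y hyQ.le]
        exact hhmono x y hx hxy
      · calc M x = g x := hMg x ⟨hx, hxQ.le⟩
          _ < g Qs := hgmono x Qs hx hxQ
          _ = h Qs := by rw [hgQs, hhQs]
          _ < h y := hhmono Qs y hQs hyQ
          _ = M y := (hMh y hyQ.le).symm
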